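/- Let $P \in \mathrm{Mat}_n(\mathbb{C}[z])$ with $\det P \ne 0$, so that $P$ is invertible over the formal Laurent series field $\mathbb{C}((z))$. Let $A \in \mathrm{Mat}_n(\mathbb{C}((z)))$ and suppose that $A_+ := P^{-1} A P - P^{-1} P'$ lies in $\mathrm{Mat}_n(\mathbb{C}[[z]])$. Then there exists a formal solution $\Psi \in \mathrm{Mat}_n(\mathbb{C}((z)))$ of $\Psi' = A \Psi$ that factors as $\Psi = P H$ with $H \in \mathrm{GL}_n(\mathbb{C}[[z]])$; in particular, the singularity of the system at $z = 0$ is apparent. -/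

import Mathlib

open Polynomial

/-- Formal derivative of a formal Laurent series, `(Df).coeff n = (n+1)·f.coeff (n+1)`. -/
noncomputable def lderiv (f : LaurentSeries ℂ) : LaurentSeries ℂ where
  coeff n := ((n + 1 : ℤ) : ℂ) * f.coeff (n + 1)
  isPWO_support' := by
    have himg : ((fun x : ℤ => x - 1) '' Function.support f.coeff).IsPWO :=
      f.isPWO_support'.image_of_monotone (fun a b hab => by simpa using hab)
    refine himg.mono ?_
    intro m hm
    have hf : f.coeff (m + 1) ≠ 0 := by
      intro h0
      apply hm
      simp [h0]
    exact ⟨m + 1, hf, by ring⟩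

/-- The natural ring homomorphism `ℂ[z] →+* ℂ((z))`. -/
noncomputable def polyToLaurent : ℂ[X] →+* LaurentSeries ℂ :=
  (HahnSeries.ofPowerSeries ℤ ℂ).comp Polynomial.coeToPowerSeries.ringHom

/-- `lderiv` commutes with the embedding of power series. -/
lemma lderiv_ofPowerSeries (f : PowerSeries ℂ) :
    lderiv (HahnSeries.ofPowerSeries ℤ ℂ f) =
      HahnSeries.ofPowerSeries ℤ ℂ (PowerSeries.derivative ℂ f) := by
  ext n
  show ((n + 1 : ℤ) : ℂ) * (HahnSeries.ofPowerSeries ℤ ℂ f).coeff (n + 1) = _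
  rcases le_or_gt 0 n with hn | hn
  · obtain ⟨m, rfl⟩ := Int.eq_ofNat_of_zero_le hn
    have h1 : ((m : ℤ) + 1) = ((m + 1 : ℕ) : ℤ) := by push_cast; ring
    rw [h1, HahnSeries.ofPowerSeries_apply_coeff, HahnSeries.ofPowerSeries_apply_coeff]
    have : (PowerSeries.coeff m) ((PowerSeries.derivative ℂ) f)
        = PowerSeries.coeff (m + 1) f * (m + 1) := PowerSeries.coeff_derivativeFun f m
    rw [this]
    push_cast
    ring
  · have hzero : ∀ (g : PowerSeries ℂ) (k : ℤ), k < 0 →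
        (HahnSeries.ofPowerSeries ℤ ℂ g).coeff k = 0 := by
      intro g k hk
      rw [HahnSeries.ofPowerSeries_apply]
      apply HahnSeries.embDomain_notin_range
      rintro ⟨m, hm⟩
      simp at hm
      omega
    rw [hzero _ _ hn]
    rcases eq_or_lt_of_le (Int.lt_iff_add_one_le.mp hn) with h1 | h1
    · rw [h1]; simp
    · rw [hzero _ _ (by omega)]; ring

/-- Leibniz rule for matrices of power series. -/
lemma matrix_deriv_mul {n : ℕ} (M N : Matrix (Fin n) (Fin n) (PowerSeries ℂ)) :
    (M * N).map (PowerSeries.derivative ℂ) =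
      M.map (PowerSeries.derivative ℂ) * N + M * N.map (PowerSeries.derivative ℂ) := by
  refine Matrix.ext fun i j => ?_
  simp only [Matrix.map_apply, Matrix.mul_apply, Matrix.add_apply]
  rw [map_sum, ← Finset.sum_add_distrib]
  refine Finset.sum_congr rfl fun k _ => ?_
  rw [Derivation.leibniz]
  simp [smul_eq_mul]
  ring

/-- Coefficients of the formal solution of `H' = B·H`, `H(0) = 1`. -/
noncomputable def solCoeff {n : ℕ} (B : Matrix (Fin n) (Fin n) (PowerSeries ℂ)) :
    ℕ → Matrix (Fin n) (Fin n) ℂ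
  | 0 => 1
  | (k + 1) => ((k + 1 : ℕ) : ℂ)⁻¹ •
      ∑ i ∈ Finset.range (k + 1),
        (B.map (PowerSeries.coeff i)) * solCoeff B (k - i)
  decreasing_by exact Nat.lt_succ_of_le (Nat.sub_le k i)

/-- The formal solution matrix. -/
noncomputable def solMatrix {n : ℕ} (B : Matrix (Fin n) (Fin n) (PowerSeries ℂ)) :
    Matrix (Fin n) (Fin n) (PowerSeries ℂ) :=
  Matrix.of fun i j => PowerSeries.mk fun k => solCoeff B k i j

lemma solMatrix_coeff {n : ℕ} (B : Matrix (Fin n) (Fin n) (PowerSeries ℂ)) (k : ℕ)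
    (i j : Fin n) : PowerSeries.coeff k (solMatrix B i j) = solCoeff B k i j := by
  simp [solMatrix]

/-- `H' = B·H` for the formal solution. -/
lemma solMatrix_deriv {n : ℕ} (B : Matrix (Fin n) (Fin n) (PowerSeries ℂ)) :
    (solMatrix B).map (PowerSeries.derivative ℂ) = B * solMatrix B := by
  refine Matrix.ext fun i j => ?_
  rw [Matrix.map_apply]
  refine PowerSeries.ext fun k => ?_
  have hL : PowerSeries.coeff k ((PowerSeries.derivative ℂ) (solMatrix B i j))
      = PowerSeries.coeff (k + 1) (solMatrix B i j) * (k + 1) :=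
    PowerSeries.coeff_derivativeFun _ _
  rw [hL, solMatrix_coeff]
  have hk1 : ((k + 1 : ℕ) : ℂ) ≠ 0 := by exact_mod_cast Nat.succ_ne_zero k
  have hsolc : solCoeff B (k + 1) = ((k + 1 : ℕ) : ℂ)⁻¹ •
      ∑ m ∈ Finset.range (k + 1),
        (B.map (PowerSeries.coeff m)) * solCoeff B (k - m) := by
    rw [solCoeff]
  have hsol : solCoeff B (k + 1) i j * ((k : ℂ) + 1)
      = (∑ m ∈ Finset.range (k + 1),
          (B.map (PowerSeries.coeff m)) * solCoeff B (k - m)) i j := by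
    rw [hsolc, Matrix.smul_apply, smul_eq_mul]
    push_cast
    field_simp
  rw [hsol]
  -- now compute the right-hand side coefficient
  rw [Matrix.mul_apply, map_sum]
  have hrhs : ∀ m : Fin n, PowerSeries.coeff k (B i m * solMatrix B m j)
      = ∑ p ∈ Finset.range (k + 1),
          PowerSeries.coeff p (B i m) * solCoeff B (k - p) m j := by
    intro m
    rw [PowerSeries.coeff_mul, Finset.Nat.sum_antidiagonal_eq_sum_range_succ_mk]
    exact Finset.sum_congr rfl fun p _ => by rw [solMatrix_coeff]
  simp only [hrhs]
  rw [Finset.sum_comm]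
  simp only [Matrix.sum_apply, Matrix.mul_apply, Matrix.map_apply]

lemma solMatrix_isUnit {n : ℕ} (B : Matrix (Fin n) (Fin n) (PowerSeries ℂ)) :
    IsUnit (solMatrix B) := by
  rw [Matrix.isUnit_iff_isUnit_det]
  rw [PowerSeries.isUnit_iff_constantCoeff]
  have h : (PowerSeries.constantCoeff) (solMatrix B).det
      = ((solMatrix B).map (PowerSeries.constantCoeff)).det :=
    RingHom.map_det _ _
  have h2 : (solMatrix B).map (PowerSeries.constantCoeff) = 1 := by
    ext i j
    rw [Matrix.map_apply]
    have : (PowerSeries.constantCoeff) (solMatrix B i j)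
        = PowerSeries.coeff 0 (solMatrix B i j) := by
      rw [PowerSeries.coeff_zero_eq_constantCoeff]
    rw [this, solMatrix_coeff]
    simp [solCoeff]
  rw [h, h2, Matrix.det_one]
  exact isUnit_one

/-- If `A₊ := P⁻¹AP − P⁻¹P'` has entries in `ℂ[[z]]`, then the system
`Ψ' = AΨ` has a formal solution `Ψ = P·H` with `H ∈ GLₙ(ℂ[[z]])`:
the singularity at `z = 0` is apparent. -/
theorem apparent_singularity {n : ℕ}
    (P : Matrix (Fin n) (Fin n) ℂ[X]) (hP : P.det ≠ 0)
    (A : Matrix (Fin n) (Fin n) (LaurentSeries ℂ))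
    (hA : ∃ B : Matrix (Fin n) (Fin n) (PowerSeries ℂ),
      B.map (HahnSeries.ofPowerSeries ℤ ℂ) =
        (P.map polyToLaurent)⁻¹ * A * (P.map polyToLaurent)
          - (P.map polyToLaurent)⁻¹
            * (P.map fun q => polyToLaurent (Polynomial.derivative q))) :
    ∃ H : Matrix (Fin n) (Fin n) (PowerSeries ℂ), IsUnit H ∧
      ((P.map polyToLaurent) * (H.map (HahnSeries.ofPowerSeries ℤ ℂ))).map lderiv
        = A * ((P.map polyToLaurent) * (H.map (HahnSeries.ofPowerSeries ℤ ℂ))) := by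
  classical
  obtain ⟨B, hB⟩ := hA
  set φ := HahnSeries.ofPowerSeries ℤ ℂ with hφ
  set Pl : Matrix (Fin n) (Fin n) (LaurentSeries ℂ) := P.map polyToLaurent with hPl
  set Pps : Matrix (Fin n) (Fin n) (PowerSeries ℂ) :=
    P.map Polynomial.coeToPowerSeries.ringHom with hPps
  have hPlφ : Pl = Pps.map φ := by
    rw [hPl, hPps, Matrix.map_map]; rfl
  -- Pl is invertible
  have hPdet : IsUnit Pl.det := by
    have hmm : Pl = polyToLaurent.mapMatrix P := rfl
    rw [hmm, ← RingHom.map_det, isUnit_iff_ne_zero]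
    intro h0
    apply hP
    have hinj : Function.Injective polyToLaurent := by
      have : (polyToLaurent : ℂ[X] → LaurentSeries ℂ)
          = (HahnSeries.ofPowerSeries ℤ ℂ) ∘ (Polynomial.coeToPowerSeries.ringHom) := rfl
      rw [this]
      exact HahnSeries.ofPowerSeries_injective.comp (Polynomial.coe_injective ℂ)
    exact hinj (by simpa using h0)
  have hinv : Pl * Pl⁻¹ = 1 := Matrix.mul_nonsing_inv _ hPdet
  -- derivative matrix
  set Pd : Matrix (Fin n) (Fin n) (LaurentSeries ℂ) :=
    P.map fun q => polyToLaurent (Polynomial.derivative q) with hPd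
  have hPdφ : Pd = (Pps.map (PowerSeries.derivative ℂ)).map φ := by
    rw [hPd, hPps, Matrix.map_map, Matrix.map_map]
    refine congrArg _ (funext fun q => ?_)
    show polyToLaurent (Polynomial.derivative q) = φ ((PowerSeries.derivative ℂ) (q : PowerSeries ℂ))
    have : (PowerSeries.derivative ℂ) (q : PowerSeries ℂ)
        = ((Polynomial.derivative q : ℂ[X]) : PowerSeries ℂ) :=
      PowerSeries.derivativeFun_coe q
    rw [this]; rfl
  -- key algebraic identity: Pl * (B.map φ) = A * Pl - Pd
  have hkey : Pl * (B.map φ) = A * Pl - Pd := by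
    rw [hB]
    rw [Matrix.mul_sub]
    congr 1
    · rw [← Matrix.mul_assoc, ← Matrix.mul_assoc, hinv, Matrix.one_mul]
    · rw [← Matrix.mul_assoc, hinv, Matrix.one_mul]
  refine ⟨solMatrix B, solMatrix_isUnit B, ?_⟩
  set H := solMatrix B with hH
  have hmul : Pl * H.map φ = (Pps * H).map φ := by
    rw [hPlφ, Matrix.map_mul]
  rw [hmul]
  have hmapl : ((Pps * H).map φ).map lderiv
      = ((Pps * H).map (PowerSeries.derivative ℂ)).map φ := by
    rw [Matrix.map_map, Matrix.map_map]
    exact congrArg _ (funext fun f => lderiv_ofPowerSeries f)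
  rw [hmapl, matrix_deriv_mul, Matrix.map_add _ (fun a b => map_add φ a b),
    Matrix.map_mul, Matrix.map_mul, ← hPdφ, ← hPlφ, ← hmul]
  have hHD : (H.map (PowerSeries.derivative ℂ)).map φ = (B.map φ) * (H.map φ) := by
    rw [hH, solMatrix_deriv, Matrix.map_mul]
  rw [hHD, ← Matrix.mul_assoc, hkey, Matrix.sub_mul, Matrix.mul_assoc]
  abel
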